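/- arXiv:1707.04002 — 2 statements merged into one kernel-verified Lean document; each statement's English description precedes it below -/
import Mathlib

section
/- (Polar coordinates on a homogeneous group) Let |·| be a homogeneous quasi-norm on a homogeneous group G of homogeneous dimension Q. Then there exists a unique positive Borel measure σ on the unit sphere 𝔖 = {x ∈ G : |x| = 1} such that for all f ∈ L¹(G), ∫_G f(x) dx = ∫₀^∞ ∫_𝔖 f(D_r y) r^{Q−1} dσ(y) dr. -/
open MeasureTheory Set
open scoped ENNReal NNReal


namespace Stmt5

noncomputable section

variable {n : ℕ}

/-- anisotropic dilation -/
def Dil (v : Fin n → ℝ) (r : ℝ) (x : Fin n → ℝ) : Fin n → ℝ := fun j => r ^ v j * x j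

structure Hyp (n : ℕ) (v : Fin n → ℝ) (N : (Fin n → ℝ) → ℝ) : Prop where
  hn : 0 < n
  hv : ∀ j, 0 < v j
  hNc : Continuous N
  hNnn : ∀ x, 0 ≤ N x
  hN0 : ∀ x, N x = 0 ↔ x = 0
  hNh : ∀ r : ℝ, 0 < r → ∀ x, N (Dil v r x) = r * N x

variable {v : Fin n → ℝ} {N : (Fin n → ℝ) → ℝ}

/-- homogeneous dimension -/
def Qh (v : Fin n → ℝ) : ℝ := ∑ j, v j

theorem Hyp.Qpos (H : Hyp n v N) : 0 < Qh v := by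
  have : Nonempty (Fin n) := ⟨⟨0, H.hn⟩⟩
  exact Finset.sum_pos (fun j _ => H.hv j) Finset.univ_nonempty

theorem dil_dil {r s : ℝ} (hr : 0 ≤ r) (hs : 0 ≤ s) (x : Fin n → ℝ) :
    Dil v r (Dil v s x) = Dil v (r * s) x := by
  funext j
  simp only [Dil, Real.mul_rpow hr hs]
  ring

@[simp] theorem dil_one (x : Fin n → ℝ) : Dil v 1 x = x := by
  funext j; simp [Dil]

theorem dil_inv_cancel {r : ℝ} (hr : 0 < r) (x : Fin n → ℝ) :
    Dil v r⁻¹ (Dil v r x) = x := by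
  rw [dil_dil (by positivity) hr.le, inv_mul_cancel₀ hr.ne', dil_one]

theorem continuous_dil_pair (hv : ∀ j, 0 < v j) :
    Continuous (fun p : ℝ × (Fin n → ℝ) => Dil v p.1 p.2) := by
  apply continuous_pi
  intro j
  exact ((Real.continuous_rpow_const (hv j).le).comp continuous_fst).mul
    ((continuous_apply j).comp continuous_snd)

theorem continuous_dil (hv : ∀ j, 0 < v j) (r : ℝ) : Continuous (Dil v r) := by
  apply continuous_pi
  intro j
  exact continuous_const.mul (continuous_apply j)

/-- volume scaling under dilation -/
theorem volume_dil_image (H : Hyp n v N) {r : ℝ} (hr : 0 < r) (s : Set (Fin n → ℝ)) :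
    volume (Dil v r '' s) = ENNReal.ofReal (r ^ Qh v) * volume s := by
  have hL : (Matrix.toLin' (Matrix.diagonal fun j => r ^ v j) : (Fin n → ℝ) →ₗ[ℝ] (Fin n → ℝ))
      = (fun x => Dil v r x) := by
    funext x
    rw [Matrix.toLin'_apply]
    funext j
    simp [Matrix.mulVec_diagonal, Dil]
  have := MeasureTheory.Measure.addHaar_image_linearMap (μ := volume)
    (Matrix.toLin' (Matrix.diagonal fun j => r ^ v j)) s
  rw [hL] at this
  rw [this, LinearMap.det_toLin', Matrix.det_diagonal]
  congr 1
  rw [abs_of_pos (Finset.prod_pos fun j _ => Real.rpow_pos_of_pos hr _)]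
  rw [Qh, Real.rpow_sum_of_pos hr]

end

end Stmt5
namespace Stmt5
noncomputable section
variable {n : ℕ} {v : Fin n → ℝ} {N : (Fin n → ℝ) → ℝ}

theorem Hyp.Npos (H : Hyp n v N) {x : Fin n → ℝ} (hx : x ≠ 0) : 0 < N x :=
  lt_of_le_of_ne (H.hNnn x) (fun h => hx ((H.hN0 x).mp h.symm))

/-- the sublevel sets of N are bounded -/
theorem isBounded_sublevel (H : Hyp n v N) (c : ℝ) :
    Bornology.IsBounded {x : Fin n → ℝ | N x ≤ c} := by
  have hne : Nonempty (Fin n) := ⟨⟨0, H.hn⟩⟩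
  have hin : Inhabited (Fin n) := ⟨⟨0, H.hn⟩⟩
  have hnt : Nontrivial (Fin n → ℝ) := Pi.nontrivial
  -- minimum of N on the unit sphere
  obtain ⟨u₀, hu₀, hmin⟩ := (isCompact_sphere (0 : Fin n → ℝ) 1).exists_isMinOn
    (NormedSpace.sphere_nonempty.mpr zero_le_one) H.hNc.continuousOn
  have hmin : ∀ y ∈ Metric.sphere (0 : Fin n → ℝ) 1, N u₀ ≤ N y := fun y hy => hmin hy
  set m := N u₀ with hm
  have hm0 : 0 < m := H.Npos (by
    intro h0
    rw [mem_sphere_zero_iff_norm, h0] at hu₀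
    simp at hu₀)
  set M : ℝ := max 1 (c / m) with hM
  have hM1 : 1 ≤ M := le_max_left _ _
  have hM0 : 0 < M := lt_of_lt_of_le one_pos hM1
  set R : ℝ := M ^ Qh v with hR
  have hR0 : 0 < R := Real.rpow_pos_of_pos hM0 _
  have key : ∀ x : Fin n → ℝ, N x ≤ c → ‖x‖ ≤ R := by
    intro x hxc
    rcases eq_or_ne x 0 with rfl | hx0
    · simp [hR0.le]
    -- find s > 0 with ‖Dil v s x‖ = 1
    obtain ⟨j0, hj0⟩ : ∃ j, x j ≠ 0 := by
      by_contra h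
      push_neg at h
      exact hx0 (funext h)
    have hcont : ∀ s : ℝ, 0 ≤ s → ContinuousAt (fun s => ‖Dil v s x‖) s := by
      intro s hs
      apply ContinuousAt.norm
      apply continuousAt_pi.mpr
      intro j
      rcases eq_or_lt_of_le hs with rfl | hs
      · exact ((Real.continuousAt_rpow_const 0 (v j) (Or.inr (H.hv j).le)).mul
          continuousAt_const)
      · exact ((Real.continuousAt_rpow_const s (v j) (Or.inl hs.ne')).mul continuousAt_const)
    obtain ⟨s2, hs2pos, hs2⟩ : ∃ s2 : ℝ, 0 < s2 ∧ 1 ≤ ‖Dil v s2 x‖ := by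
      have h1 : Filter.Tendsto (fun s : ℝ => s ^ v j0 * |x j0|) Filter.atTop Filter.atTop :=
        (tendsto_rpow_atTop (H.hv j0)).atTop_mul_const (abs_pos.mpr hj0)
      have h2 : ∀ᶠ s : ℝ in Filter.atTop, 1 ≤ s ^ v j0 * |x j0| := h1.eventually_ge_atTop 1
      obtain ⟨s2, hs2⟩ := (h2.and (Filter.eventually_ge_atTop 1)).exists
      refine ⟨s2, lt_of_lt_of_le one_pos hs2.2, le_trans hs2.1 ?_⟩
      have h3 : |s2 ^ v j0| * |x j0| ≤ ‖Dil v s2 x‖ := by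
        have := norm_le_pi_norm (Dil v s2 x) j0
        simpa [Dil, Real.norm_eq_abs, abs_mul] using this
      calc s2 ^ v j0 * |x j0| = |s2 ^ v j0| * |x j0| := by
            rw [abs_of_nonneg (Real.rpow_nonneg (by linarith) _)]
        _ ≤ _ := h3
    have h0 : ‖Dil v (0:ℝ) x‖ = 0 := by
      have : Dil v (0:ℝ) x = 0 := by
        funext j; simp [Dil, Real.zero_rpow (H.hv j).ne']
      simp [this]
    obtain ⟨s, hsmem, hs⟩ : ∃ s ∈ Icc (0:ℝ) s2, ‖Dil v s x‖ = 1 := by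
      have : (1:ℝ) ∈ Icc (‖Dil v (0:ℝ) x‖) (‖Dil v s2 x‖) := by
        constructor
        · rw [h0]; exact zero_le_one
        · exact hs2
      have hiv := intermediate_value_Icc hs2pos.le
        (fun s hs => (hcont s hs.1).continuousWithinAt)
      exact hiv this
    have hspos : 0 < s := by
      rcases eq_or_lt_of_le hsmem.1 with rfl | h
      · rw [h0] at hs; norm_num at hs
      · exact h
    set u := Dil v s x with hu
    have hxu : x = Dil v s⁻¹ u := (dil_inv_cancel hspos x).symm
    have hNu : m ≤ N u := hmin u (by rw [mem_sphere_zero_iff_norm]; exact hs)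
    have hNx : N x = s⁻¹ * N u := by rw [hxu, H.hNh _ (by positivity)]
    have hsinv : s⁻¹ ≤ M := by
      have h1 : s⁻¹ * m ≤ N x := by
        rw [hNx]
        exact mul_le_mul_of_nonneg_left hNu (by positivity)
      have h2 : s⁻¹ * m ≤ c := le_trans h1 hxc
      calc s⁻¹ ≤ c / m := (le_div_iff₀ hm0).mpr h2
        _ ≤ M := le_max_right _ _
    rw [hxu]
    rw [pi_norm_le_iff_of_nonneg hR0.le]
    intro j
    have huj : |u j| ≤ 1 := by
      have := norm_le_pi_norm u j
      rwa [hs] at this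
    calc ‖Dil v s⁻¹ u j‖ = |s⁻¹ ^ v j| * |u j| := by
          rw [show Dil v s⁻¹ u j = s⁻¹ ^ v j * u j from rfl, Real.norm_eq_abs, abs_mul]
      _ ≤ |s⁻¹ ^ v j| * 1 := mul_le_mul_of_nonneg_left huj (abs_nonneg _)
      _ = (s⁻¹) ^ v j := by
          rw [mul_one, abs_of_nonneg (Real.rpow_nonneg (inv_nonneg.mpr hspos.le) _)]
      _ ≤ M ^ v j := Real.rpow_le_rpow (by positivity) hsinv (H.hv j).le
      _ ≤ M ^ Qh v := Real.rpow_le_rpow_of_exponent_le hM1 (by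
          apply Finset.single_le_sum (f := v) (fun i _ => (H.hv i).le) (Finset.mem_univ j))
  exact (Metric.isBounded_closedBall (x := (0: Fin n → ℝ)) (r := R)).subset
    (fun x hx => by
      rw [Metric.mem_closedBall, dist_zero_right]
      exact key x hx)

theorem volume_sublevel_lt_top (H : Hyp n v N) (c : ℝ) :
    volume {x : Fin n → ℝ | N x ≤ c} < ⊤ := by
  have hcl : IsClosed {x : Fin n → ℝ | N x ≤ c} := isClosed_le H.hNc continuous_const
  have := Metric.isCompact_of_isClosed_isBounded hcl (isBounded_sublevel H c)
  exact this.measure_lt_top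


/-- base point on the sphere -/
def basept (H : Hyp n v N) : {x : Fin n → ℝ // N x = 1} := by
  refine ⟨Dil v (N (fun _ => 1))⁻¹ (fun _ => 1), ?_⟩
  have h1 : (fun _ => (1:ℝ)) ≠ (0 : Fin n → ℝ) := by
    intro h
    have := congrFun h ⟨0, H.hn⟩
    norm_num at this
  have hc : 0 < N (fun _ => 1) := H.Npos h1
  rw [H.hNh _ (by positivity), inv_mul_cancel₀ hc.ne']

/-- radial projection to the sphere -/
def proj (H : Hyp n v N) (x : Fin n → ℝ) : {x : Fin n → ℝ // N x = 1} :=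
  if h : 0 < N x then ⟨Dil v (N x)⁻¹ x, by rw [H.hNh _ (by positivity), inv_mul_cancel₀ h.ne']⟩
  else basept H

theorem proj_coe (H : Hyp n v N) {x : Fin n → ℝ} (hx : 0 < N x) :
    (proj H x : Fin n → ℝ) = Dil v (N x)⁻¹ x := by
  rw [proj, dif_pos hx]

theorem proj_dil (H : Hyp n v N) {r : ℝ} (hr : 0 < r) {x : Fin n → ℝ} (hx : 0 < N x) :
    proj H (Dil v r x) = proj H x := by
  have h1 : 0 < N (Dil v r x) := by rw [H.hNh _ hr]; positivity
  apply Subtype.ext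
  have hsc : (N (Dil v r x))⁻¹ * r = (N x)⁻¹ := by
    rw [H.hNh _ hr, mul_comm r (N x), mul_inv, mul_assoc, inv_mul_cancel₀ hr.ne', mul_one]
  rw [proj_coe H h1, proj_coe H hx,
    dil_dil (inv_nonneg.mpr h1.le) hr.le, hsc]

theorem proj_sphere (H : Hyp n v N) (y : {x : Fin n → ℝ // N x = 1}) :
    proj H (y : Fin n → ℝ) = y := by
  apply Subtype.ext
  rw [proj_coe H (by rw [y.2]; norm_num)]
  rw [y.2]
  simp

theorem proj_dil_sphere (H : Hyp n v N) {r : ℝ} (hr : 0 < r) (y : {x : Fin n → ℝ // N x = 1}) :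
    proj H (Dil v r (y : Fin n → ℝ)) = y := by
  rw [proj_dil H hr (by rw [y.2]; norm_num), proj_sphere]

theorem measurable_proj (H : Hyp n v N) : Measurable (proj H) := by
  have hemb : MeasurableEmbedding ((↑) : {x : Fin n → ℝ // N x = 1} → (Fin n → ℝ)) :=
    MeasurableEmbedding.subtype_coe (by
      exact measurableSet_eq_fun H.hNc.measurable measurable_const)
  rw [← hemb.measurable_comp_iff]
  classical
  have : ((↑) : {x : Fin n → ℝ // N x = 1} → (Fin n → ℝ)) ∘ proj H =
      Set.piecewise {x | 0 < N x} (fun x => Dil v (N x)⁻¹ x) (fun _ => (basept H : Fin n → ℝ)) := by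
    funext x
    by_cases h : 0 < N x
    · simp only [Function.comp_apply, Set.piecewise, Set.mem_setOf_eq, if_pos h, proj_coe H h]
    · simp only [Function.comp_apply, Set.piecewise, Set.mem_setOf_eq, if_neg h, proj, dif_neg h]
  rw [this]
  apply Measurable.piecewise
  · exact measurableSet_lt measurable_const H.hNc.measurable
  · apply measurable_pi_lambda
    intro j
    exact (((Real.continuous_rpow_const (H.hv j).le).measurable).comp
      H.hNc.measurable.inv).mul (measurable_pi_apply j)
  · exact measurable_const

/-- the cone over E -/
def cone (H : Hyp n v N) (E : Set {x : Fin n → ℝ // N x = 1}) (t : ℝ) : Set (Fin n → ℝ) :=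
  {x | 0 < N x ∧ N x ≤ t ∧ proj H x ∈ E}

theorem measurableSet_cone (H : Hyp n v N) {E : Set {x : Fin n → ℝ // N x = 1}}
    (hE : MeasurableSet E) (t : ℝ) : MeasurableSet (cone H E t) := by
  apply MeasurableSet.inter (measurableSet_lt measurable_const H.hNc.measurable)
  exact (measurableSet_le H.hNc.measurable measurable_const).inter
    ((measurable_proj H) hE)

theorem cone_eq_dil (H : Hyp n v N) (E : Set {x : Fin n → ℝ // N x = 1}) {t : ℝ} (ht : 0 < t) :
    cone H E t = Dil v t '' cone H E 1 := by
  ext x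
  constructor
  · intro ⟨h1, h2, h3⟩
    refine ⟨Dil v t⁻¹ x, ⟨?_, ?_, ?_⟩, ?_⟩
    · rw [H.hNh _ (by positivity)]; positivity
    · rw [H.hNh _ (by positivity)]
      rw [inv_mul_le_iff₀ ht, mul_one]
      exact h2
    · rw [proj_dil H (by positivity) h1]; exact h3
    · rw [dil_dil ht.le (by positivity), mul_inv_cancel₀ ht.ne', dil_one]
  · rintro ⟨y, ⟨h1, h2, h3⟩, rfl⟩
    refine ⟨by rw [H.hNh _ ht]; positivity, ?_, ?_⟩
    · rw [H.hNh _ ht]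
      calc t * N y ≤ t * 1 := mul_le_mul_of_nonneg_left h2 ht.le
        _ = t := mul_one t
    · rw [proj_dil H ht h1]; exact h3

theorem volume_cone (H : Hyp n v N) (E : Set {x : Fin n → ℝ // N x = 1}) {t : ℝ} (ht : 0 < t) :
    volume (cone H E t) = ENNReal.ofReal (t ^ Qh v) * volume (cone H E 1) := by
  rw [cone_eq_dil H E ht, volume_dil_image H ht]

theorem volume_cone_lt_top (H : Hyp n v N) (E : Set {x : Fin n → ℝ // N x = 1}) {t : ℝ} :
    volume (cone H E t) < ⊤ := by
  apply lt_of_le_of_lt (measure_mono (fun x hx => hx.2.1)) (volume_sublevel_lt_top H t)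

/-- surface measure on the sphere -/
def sphMeasure (H : Hyp n v N) : Measure {x : Fin n → ℝ // N x = 1} :=
  (ENNReal.ofReal (Qh v)) • Measure.map (proj H) (volume.restrict (cone H Set.univ 1))

theorem sphMeasure_apply (H : Hyp n v N) {E : Set {x : Fin n → ℝ // N x = 1}}
    (hE : MeasurableSet E) :
    sphMeasure H E = ENNReal.ofReal (Qh v) * volume (cone H E 1) := by
  rw [sphMeasure, Measure.smul_apply, Measure.map_apply (measurable_proj H) hE,
    Measure.restrict_apply ((measurable_proj H) hE)]
  congr 2
  ext x
  simp only [Set.mem_inter_iff, Set.mem_preimage, cone, Set.mem_setOf_eq, Set.mem_univ,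
    and_true, true_and]
  tauto

instance sphMeasure_finite (H : Hyp n v N) : IsFiniteMeasure (sphMeasure H) := by
  constructor
  rw [sphMeasure_apply H MeasurableSet.univ]
  exact ENNReal.mul_lt_top ENNReal.ofReal_lt_top (volume_cone_lt_top H _)


/-- the radial measure r^{Q-1} dr on (0,∞) -/
def rho (v : Fin n → ℝ) : Measure ℝ :=
  (volume.restrict (Ioi (0:ℝ))).withDensity fun r => ENNReal.ofReal (r ^ (Qh v - 1))

instance rho_sigmaFinite : SigmaFinite (rho v) := by
  rw [rho]; infer_instance

theorem rho_apply {s : Set ℝ} (hs : MeasurableSet s) :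
    rho v s = ∫⁻ r in s ∩ Ioi 0, ENNReal.ofReal (r ^ (Qh v - 1)) := by
  rw [rho, withDensity_apply _ hs, Measure.restrict_restrict hs]

theorem rho_Ioc (H : Hyp n v N) {a b : ℝ} (ha : 0 ≤ a) (hab : a ≤ b) :
    rho v (Ioc a b) = ENNReal.ofReal ((b ^ Qh v - a ^ Qh v) / Qh v) := by
  have hQ := H.Qpos
  rw [rho_apply measurableSet_Ioc]
  have hsub : Ioc a b ∩ Ioi 0 = Ioc a b := by
    apply inter_eq_left.mpr
    intro x hx
    exact lt_of_le_of_lt ha hx.1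
  rw [hsub]
  have hint : IntegrableOn (fun r : ℝ => r ^ (Qh v - 1)) (Ioc a b) := by
    have h1 := intervalIntegral.intervalIntegrable_rpow' (a := a) (b := b)
      (show (-1:ℝ) < Qh v - 1 by linarith)
    rwa [intervalIntegrable_iff_integrableOn_Ioc_of_le hab] at h1
  have hnn : 0 ≤ᵐ[volume.restrict (Ioc a b)] fun r : ℝ => r ^ (Qh v - 1) := by
    filter_upwards [ae_restrict_mem measurableSet_Ioc] with r hr
    exact Real.rpow_nonneg (le_trans ha hr.1.le) _
  rw [← ofReal_integral_eq_lintegral_ofReal hint hnn]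
  congr 1
  rw [← intervalIntegral.integral_of_le hab,
    integral_rpow (Or.inl (show (-1:ℝ) < Qh v - 1 by linarith))]
  norm_num

theorem rho_Ioc_ne_top (H : Hyp n v N) (a b : ℝ) : rho v (Ioc a b) ≠ ⊤ := by
  have h1 : Ioc a b ⊆ Iic 0 ∪ Ioc 0 (max b 0) := by
    intro x hx
    rcases le_or_gt x 0 with h | h
    · exact Or.inl h
    · exact Or.inr ⟨h, le_max_of_le_left hx.2⟩
  have h2 : rho v (Iic 0) = 0 := by
    rw [rho_apply measurableSet_Iic]
    have : Iic (0:ℝ) ∩ Ioi 0 = ∅ := by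
      ext x; simp only [mem_inter_iff, mem_Iic, mem_Ioi, mem_empty_iff_false, iff_false]
      intro ⟨h1, h2⟩; linarith
    simp [this]
  apply ne_top_of_le_ne_top _ ((measure_mono h1).trans (measure_union_le _ _))
  rw [h2, zero_add, rho_Ioc H le_rfl (le_max_right _ _)]
  exact ENNReal.ofReal_ne_top

theorem volume_singleton_zero (hn : 0 < n) : volume ({0} : Set (Fin n → ℝ)) = 0 := by
  have h : ({0} : Set (Fin n → ℝ)) = Set.pi univ (fun _ => ({0} : Set ℝ)) := by
    rw [Set.univ_pi_singleton]
    rfl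
  rw [h, volume_pi_pi]
  simp only [Real.volume_singleton, Finset.prod_const, Finset.card_univ, Fintype.card_fin]
  exact zero_pow hn.ne'

theorem cone_mono (H : Hyp n v N) (E : Set {x : Fin n → ℝ // N x = 1}) {a b : ℝ} (hab : a ≤ b) :
    cone H E a ⊆ cone H E b := fun x hx => ⟨hx.1, hx.2.1.trans hab, hx.2.2⟩

theorem volume_cone' (H : Hyp n v N) (E : Set {x : Fin n → ℝ // N x = 1}) {t : ℝ} (ht : 0 ≤ t) :
    volume (cone H E t) = ENNReal.ofReal (t ^ Qh v) * volume (cone H E 1) := by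
  rcases eq_or_lt_of_le ht with rfl | ht
  · have h1 : cone H E (0:ℝ) = ∅ := by
      ext x
      simp only [cone, mem_setOf_eq, mem_empty_iff_false, iff_false, not_and]
      intro h1 h2
      linarith
    rw [h1, Real.zero_rpow H.Qpos.ne']
    simp
  · exact volume_cone H E ht

theorem helper_arith (H : Hyp n v N) {E : Set {x : Fin n → ℝ // N x = 1}}
    (hE : MeasurableSet E) {a b : ℝ} (ha : 0 ≤ a) (hab : a ≤ b) :
    volume (cone H E b) - volume (cone H E a) = rho v (Ioc a b) * sphMeasure H E := by
  have hQ := H.Qpos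
  rw [volume_cone' H E (ha.trans hab), volume_cone' H E ha, rho_Ioc H ha hab,
    sphMeasure_apply H hE]
  rw [← ENNReal.sub_mul (fun _ _ => (volume_cone_lt_top H E).ne),
    ← ENNReal.ofReal_sub _ (Real.rpow_nonneg ha _), ← mul_assoc,
    ← ENNReal.ofReal_mul
      (div_nonneg (sub_nonneg.mpr (Real.rpow_le_rpow ha hab hQ.le)) hQ.le),
    div_mul_cancel₀ _ hQ.ne']

theorem slice_Ioc (H : Hyp n v N) {E : Set {x : Fin n → ℝ // N x = 1}}
    (hE : MeasurableSet E) {a b : ℝ} (hab : a < b) :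
    volume (N ⁻¹' Ioc a b ∩ proj H ⁻¹' E) = rho v (Ioc a b) * sphMeasure H E := by
  rcases le_or_gt b 0 with hb | hb
  · have h1 : N ⁻¹' Ioc a b ∩ proj H ⁻¹' E ⊆ {0} := by
      intro x ⟨hx1, _⟩
      have : N x = 0 := le_antisymm (hx1.2.trans hb) (H.hNnn x)
      exact (H.hN0 x).mp this
    have h2 : rho v (Ioc a b) = 0 := by
      rw [rho_apply measurableSet_Ioc]
      have : Ioc a b ∩ Ioi 0 = ∅ := by
        ext x
        simp only [mem_inter_iff, mem_Ioc, mem_Ioi, mem_empty_iff_false, iff_false, not_and]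
        intro h1 h2
        linarith [h1.2]
      simp [this]
    rw [h2, zero_mul]
    exact le_antisymm ((measure_mono h1).trans (volume_singleton_zero H.hn).le) (zero_le ..)
  rcases le_or_gt 0 a with ha | ha
  · have hset : N ⁻¹' Ioc a b ∩ proj H ⁻¹' E = cone H E b \ cone H E a := by
      ext x
      simp only [mem_inter_iff, mem_preimage, mem_Ioc, cone, mem_diff, mem_setOf_eq]
      constructor
      · rintro ⟨⟨h1, h2⟩, h3⟩
        exact ⟨⟨lt_of_le_of_lt ha h1, h2, h3⟩, fun hc => absurd hc.2.1 (not_le.mpr h1)⟩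
      · rintro ⟨⟨h1, h2, h3⟩, h4⟩
        refine ⟨⟨?_, h2⟩, h3⟩
        by_contra hle
        exact h4 ⟨h1, not_lt.mp hle, h3⟩
    rw [hset, measure_diff (cone_mono H E hab.le)
      ((measurableSet_cone H hE a).nullMeasurableSet) (volume_cone_lt_top H E).ne]
    exact helper_arith H hE ha hab.le
  · have hset : volume (N ⁻¹' Ioc a b ∩ proj H ⁻¹' E) = volume (cone H E b) := by
      apply le_antisymm
      · refine le_trans (measure_mono (show N ⁻¹' Ioc a b ∩ proj H ⁻¹' E ⊆
          cone H E b ∪ {0} from ?_)) ?_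
        · intro x ⟨hx1, hx2⟩
          rcases eq_or_ne x 0 with rfl | hx0
          · exact Or.inr rfl
          · exact Or.inl ⟨H.Npos hx0, hx1.2, hx2⟩
        · refine le_trans (measure_union_le _ _) ?_
          rw [volume_singleton_zero H.hn, add_zero]
      · apply measure_mono
        intro x ⟨h1, h2, h3⟩
        exact ⟨⟨ha.trans h1, h2⟩, h3⟩
    have hrho : rho v (Ioc a b) = rho v (Ioc 0 b) := by
      have hsets : Ioc a b ∩ Ioi 0 = Ioc 0 b ∩ Ioi 0 := by
        ext x
        constructor
        · rintro ⟨⟨_, h2⟩, h3⟩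
          exact ⟨⟨h3, h2⟩, h3⟩
        · rintro ⟨⟨h1, h2⟩, h3⟩
          exact ⟨⟨ha.trans h1, h2⟩, h3⟩
      rw [rho_apply measurableSet_Ioc, rho_apply measurableSet_Ioc, hsets]
    rw [hset, hrho, ← helper_arith H hE le_rfl hb.le]
    have : volume (cone H E 0) = 0 := by
      rw [volume_cone' H E le_rfl, Real.zero_rpow H.Qpos.ne']
      simp
    rw [this, tsub_zero]

theorem measurable_psi (H : Hyp n v N) :
    Measurable (fun x => (N x, proj H x) : (Fin n → ℝ) → ℝ × {x : Fin n → ℝ // N x = 1}) :=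
  H.hNc.measurable.prodMk (measurable_proj H)

theorem prod_eq_map (H : Hyp n v N) :
    (rho v).prod (sphMeasure H) =
      Measure.map (fun x => (N x, proj H x)) volume := by
  apply Measure.prod_eq
  intro s E hs hE
  rw [Measure.map_apply (measurable_psi H) (hs.prod hE)]
  have hpre : (fun x => (N x, proj H x)) ⁻¹' (s ×ˢ E) = N ⁻¹' s ∩ proj H ⁻¹' E := rfl
  rw [hpre]
  have key : Measure.map N (volume.restrict (proj H ⁻¹' E)) = sphMeasure H E • rho v := by
    refine Measure.ext_of_Ioc' _ _ (fun a b hab => ?_) (fun a b hab => ?_)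
    · rw [Measure.map_apply H.hNc.measurable measurableSet_Ioc,
        Measure.restrict_apply (H.hNc.measurable measurableSet_Ioc)]
      refine ((measure_mono (fun x hx => ?_)).trans_lt
        (volume_sublevel_lt_top H (max b 0))).ne
      exact le_trans hx.1.2 (le_max_left _ _) 
    · rw [Measure.map_apply H.hNc.measurable measurableSet_Ioc,
        Measure.restrict_apply (H.hNc.measurable measurableSet_Ioc),
        Measure.smul_apply, smul_eq_mul, slice_Ioc H hE hab, mul_comm]
  have h2 : volume (N ⁻¹' s ∩ proj H ⁻¹' E) =
      Measure.map N (volume.restrict (proj H ⁻¹' E)) s := by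
    rw [Measure.map_apply H.hNc.measurable hs,
      Measure.restrict_apply (H.hNc.measurable hs)]
  rw [h2, key, Measure.smul_apply, smul_eq_mul, mul_comm]

theorem measurable_phi (H : Hyp n v N) :
    Measurable (fun p : ℝ × {x : Fin n → ℝ // N x = 1} => Dil v p.1 p.2.val) := by
  apply measurable_pi_lambda
  intro j
  have h1 : Measurable fun p : ℝ × {x : Fin n → ℝ // N x = 1} => p.1 ^ v j := by fun_prop
  have h2 : Measurable fun p : ℝ × {x : Fin n → ℝ // N x = 1} => (p.2 : Fin n → ℝ) j :=
    (measurable_pi_apply j).comp (measurable_subtype_coe.comp measurable_snd)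
  exact h1.mul h2

theorem map_phi (H : Hyp n v N) :
    Measure.map (fun p : ℝ × {x : Fin n → ℝ // N x = 1} => Dil v p.1 p.2.val)
      ((rho v).prod (sphMeasure H)) = volume := by
  rw [prod_eq_map H, Measure.map_map (measurable_phi H) (measurable_psi H)]
  have hae : (fun p : ℝ × {x : Fin n → ℝ // N x = 1} => Dil v p.1 p.2.val) ∘
      (fun x => (N x, proj H x)) =ᵐ[volume] id := by
    have hsub : {x : Fin n → ℝ | ((fun p : ℝ × {x : Fin n → ℝ // N x = 1} => Dil v p.1 p.2.val) ∘
        (fun x => (N x, proj H x))) x ≠ id x} ⊆ {0} := by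
      intro x hx
      by_contra hx0
      apply hx
      have hNx : 0 < N x := H.Npos hx0
      simp only [Function.comp_apply, id_eq]
      rw [proj_coe H hNx, dil_dil (H.hNnn x) (inv_nonneg.mpr hNx.le),
        mul_inv_cancel₀ hNx.ne', dil_one]
    exact measure_mono_null hsub (volume_singleton_zero H.hn)
  rw [Measure.map_congr hae, Measure.map_id]

/-- The polar coordinates formula. -/
theorem polar_formula (H : Hyp n v N) (f : (Fin n → ℝ) → ℂ) (hf : Integrable f) :
    ∫ x, f x = ∫ r in Set.Ioi (0:ℝ),
      (r ^ (Qh v - 1)) • ∫ y : {x : Fin n → ℝ // N x = 1},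
        f (Dil v r (y : Fin n → ℝ)) ∂(sphMeasure H) := by
  have hmap := map_phi H
  have hPhi := measurable_phi H
  have hsm : AEStronglyMeasurable f
      (Measure.map (fun p : ℝ × {x : Fin n → ℝ // N x = 1} => Dil v p.1 p.2.val)
        ((rho v).prod (sphMeasure H))) := by
    rw [hmap]; exact hf.1
  have hint : Integrable (fun p : ℝ × {x : Fin n → ℝ // N x = 1} => f (Dil v p.1 p.2.val))
      ((rho v).prod (sphMeasure H)) := by
    apply (integrable_map_measure hsm hPhi.aemeasurable).mp
    rwa [hmap]
  have step1 : ∫ x, f x = ∫ p : ℝ × {x : Fin n → ℝ // N x = 1},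
      f (Dil v p.1 p.2.val) ∂((rho v).prod (sphMeasure H)) := by
    rw [← integral_map hPhi.aemeasurable hsm, hmap]
  rw [step1, MeasureTheory.integral_prod _ hint]
  -- now unfold rho as withDensity
  have hdens : Measurable (fun r : ℝ => (r ^ (Qh v - 1)).toNNReal) := by fun_prop
  have step2 : ∫ r, (∫ y, f (Dil v r (y : Fin n → ℝ)) ∂(sphMeasure H)) ∂(rho v) =
      ∫ r in Set.Ioi (0:ℝ), ((r ^ (Qh v - 1)).toNNReal : ℝ) •
        ∫ y, f (Dil v r (y : Fin n → ℝ)) ∂(sphMeasure H) := by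
    rw [rho]
    have : (fun r : ℝ => ENNReal.ofReal (r ^ (Qh v - 1))) =
        (fun r : ℝ => ((r ^ (Qh v - 1)).toNNReal : ℝ≥0∞)) := rfl
    rw [this, integral_withDensity_eq_integral_smul hdens]
    simp_rw [NNReal.smul_def]
  rw [step2]
  apply setIntegral_congr_fun measurableSet_Ioi
  intro r hr
  have : ((r ^ (Qh v - 1)).toNNReal : ℝ) = r ^ (Qh v - 1) :=
    Real.coe_toNNReal _ (Real.rpow_nonneg (le_of_lt hr) _)
  simp only [this]

theorem test_integral (H : Hyp n v N) (τ : Measure {x : Fin n → ℝ // N x = 1})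
    {E : Set {x : Fin n → ℝ // N x = 1}} (hE : MeasurableSet E) {r : ℝ} (hr : 0 < r) :
    (∫ y : {x : Fin n → ℝ // N x = 1},
        (N ⁻¹' Ioc 1 2 ∩ proj H ⁻¹' E).indicator (fun _ => (1:ℂ)) (Dil v r (y : Fin n → ℝ)) ∂τ)
      = (Ioc (1:ℝ) 2).indicator (fun _ => (τ E).toReal • (1:ℂ)) r := by
  have hmem : ∀ y : {x : Fin n → ℝ // N x = 1},
      Dil v r (y : Fin n → ℝ) ∈ N ⁻¹' Ioc 1 2 ∩ proj H ⁻¹' E ↔ (r ∈ Ioc 1 2 ∧ y ∈ E) := by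
    intro y
    rw [mem_inter_iff, mem_preimage, mem_preimage, H.hNh r hr, y.2, mul_one,
      proj_dil_sphere H hr y]
  by_cases hrm : r ∈ Ioc (1:ℝ) 2
  · rw [indicator_of_mem hrm]
    have heq : (fun y : {x : Fin n → ℝ // N x = 1} =>
        (N ⁻¹' Ioc 1 2 ∩ proj H ⁻¹' E).indicator (fun _ => (1:ℂ)) (Dil v r (y : Fin n → ℝ)))
        = fun y => E.indicator (fun _ => (1:ℂ)) y := by
      funext y
      by_cases hy : y ∈ E
      · rw [indicator_of_mem ((hmem y).mpr ⟨hrm, hy⟩), indicator_of_mem hy]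
      · rw [indicator_of_notMem (fun hc => hy ((hmem y).mp hc).2), indicator_of_notMem hy]
    rw [heq, integral_indicator_const _ hE, measureReal_def]
  · rw [indicator_of_notMem hrm]
    have heq : (fun y : {x : Fin n → ℝ // N x = 1} =>
        (N ⁻¹' Ioc 1 2 ∩ proj H ⁻¹' E).indicator (fun _ => (1:ℂ)) (Dil v r (y : Fin n → ℝ)))
        = fun _ => (0:ℂ) := by
      funext y
      exact indicator_of_notMem (fun hc => hrm ((hmem y).mp hc).1) _
    rw [heq, integral_zero]

theorem key_value (H : Hyp n v N) (τ : Measure {x : Fin n → ℝ // N x = 1})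
    (hPτ : ∀ f : (Fin n → ℝ) → ℂ, Integrable f →
      ∫ x, f x = ∫ r in Set.Ioi (0:ℝ),
        (r ^ (Qh v - 1)) • ∫ y : {x : Fin n → ℝ // N x = 1},
          f (Dil v r (y : Fin n → ℝ)) ∂τ)
    {E : Set {x : Fin n → ℝ // N x = 1}} (hE : MeasurableSet E) :
    ∫ x, (N ⁻¹' Ioc 1 2 ∩ proj H ⁻¹' E).indicator (fun _ => (1:ℂ)) x
      = ((2 ^ Qh v - 1) / Qh v) • ((τ E).toReal • (1:ℂ)) := by
  have hQ := H.Qpos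
  have hSmeas : MeasurableSet (N ⁻¹' Ioc 1 2 ∩ proj H ⁻¹' E) :=
    (H.hNc.measurable measurableSet_Ioc).inter ((measurable_proj H) hE)
  have hfint : Integrable ((N ⁻¹' Ioc 1 2 ∩ proj H ⁻¹' E).indicator (fun _ => (1:ℂ))) := by
    rw [integrable_indicator_iff hSmeas]
    apply (integrableOn_const_iff (C := (1:ℂ))).mpr
    right
    refine lt_of_le_of_lt (measure_mono (fun x hx => ?_)) (volume_sublevel_lt_top H 2)
    exact hx.1.2
  rw [hPτ _ hfint]
  have hcongr : ∀ r ∈ Ioi (0:ℝ),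
      (r ^ (Qh v - 1)) • (∫ y : {x : Fin n → ℝ // N x = 1},
        (N ⁻¹' Ioc 1 2 ∩ proj H ⁻¹' E).indicator (fun _ => (1:ℂ))
          (Dil v r (y : Fin n → ℝ)) ∂τ)
      = (Ioc (1:ℝ) 2).indicator
          (fun r => (r ^ (Qh v - 1)) • ((τ E).toReal • (1:ℂ))) r := by
    intro r hr
    rw [test_integral H τ hE hr]
    by_cases hrm : r ∈ Ioc (1:ℝ) 2
    · rw [indicator_of_mem hrm, indicator_of_mem hrm]
    · rw [indicator_of_notMem hrm, indicator_of_notMem hrm, smul_zero]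
  rw [setIntegral_congr_fun measurableSet_Ioi hcongr,
    setIntegral_indicator measurableSet_Ioc]
  have hinter : Ioi (0:ℝ) ∩ Ioc 1 2 = Ioc 1 2 := by
    apply inter_eq_right.mpr
    intro x hx
    exact lt_trans one_pos hx.1
  rw [hinter, integral_smul_const]
  congr 1
  rw [← intervalIntegral.integral_of_le (by norm_num : (1:ℝ) ≤ 2),
    integral_rpow (Or.inl (by linarith : (-1:ℝ) < Qh v - 1))]
  rw [sub_add_cancel, Real.one_rpow]

theorem sphMeasure_pos (H : Hyp n v N) : sphMeasure H Set.univ ≠ 0 := by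
  rw [sphMeasure_apply H MeasurableSet.univ]
  apply mul_ne_zero
  · simp only [ne_eq, ENNReal.ofReal_eq_zero, not_le]
    exact H.Qpos
  · have hopen : IsOpen {x : Fin n → ℝ | 0 < N x ∧ N x < 1} :=
      (isOpen_lt continuous_const H.hNc).inter (isOpen_lt H.hNc continuous_const)
    have hsub : {x : Fin n → ℝ | 0 < N x ∧ N x < 1} ⊆ cone H Set.univ 1 :=
      fun x hx => ⟨hx.1, hx.2.le, mem_univ _⟩
    have hne : (basept H : Fin n → ℝ) ∈ Dil v 2⁻¹ '' {x | 0 < N x ∧ N x < 1} →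
        True := fun _ => trivial
    have hmem : Dil v 2⁻¹ (basept H : Fin n → ℝ) ∈ {x : Fin n → ℝ | 0 < N x ∧ N x < 1} := by
      constructor
      · rw [H.hNh _ (by norm_num), (basept H).2, mul_one]; norm_num
      · rw [H.hNh _ (by norm_num), (basept H).2, mul_one]; norm_num
    have := hopen.measure_pos volume ⟨_, hmem⟩
    exact ne_of_gt (lt_of_lt_of_le this (measure_mono hsub))

theorem sphMeasure_unique (H : Hyp n v N) (σ' : Measure {x : Fin n → ℝ // N x = 1})
    (hP : ∀ f : (Fin n → ℝ) → ℂ, Integrable f →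
      ∫ x, f x = ∫ r in Set.Ioi (0:ℝ),
        (r ^ (Qh v - 1)) • ∫ y : {x : Fin n → ℝ // N x = 1},
          f (Dil v r (y : Fin n → ℝ)) ∂σ') :
    σ' = sphMeasure H := by
  have hQ := H.Qpos
  have hk : 0 < (2 ^ Qh v - 1) / Qh v := by
    apply div_pos _ hQ
    rw [sub_pos]
    exact Real.one_lt_rpow one_lt_two hQ
  have hPσ : ∀ f : (Fin n → ℝ) → ℂ, Integrable f →
      ∫ x, f x = ∫ r in Set.Ioi (0:ℝ),
        (r ^ (Qh v - 1)) • ∫ y : {x : Fin n → ℝ // N x = 1},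
          f (Dil v r (y : Fin n → ℝ)) ∂(sphMeasure H) :=
    fun f hf => polar_formula H f hf
  have hsame : ∀ E : Set {x : Fin n → ℝ // N x = 1}, MeasurableSet E →
      (σ' E).toReal = (sphMeasure H E).toReal := by
    intro E hE
    have h1 := key_value H σ' hP hE
    have h2 := key_value H (sphMeasure H) hPσ hE
    rw [h1] at h2
    have h3 := smul_right_injective ℂ (ne_of_gt hk) h2
    have h4 := congrArg Complex.re h3
    simpa using h4
  have huniv : σ' Set.univ ≠ ⊤ := by
    intro htop
    have h1 := hsame Set.univ MeasurableSet.univ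
    rw [htop, ENNReal.toReal_top] at h1
    have h2 : sphMeasure H Set.univ ≠ ⊤ := measure_ne_top _ _
    exact sphMeasure_pos H ((ENNReal.toReal_eq_zero_iff _).mp h1.symm |>.resolve_right h2)
  ext E hE
  have h1 := hsame E hE
  have h2 : σ' E ≠ ⊤ := ne_top_of_le_ne_top huniv (measure_mono (subset_univ E))
  exact (ENNReal.toReal_eq_toReal_iff' h2 (measure_ne_top _ _)).mp h1

end
end Stmt5

/-- Polar coordinates on a homogeneous group: there is a unique positive Borel
measure `σ` on the unit sphere `{x : N x = 1}` of a homogeneous quasi-norm `N`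
such that `∫_G f = ∫₀^∞ ∫_𝔖 f(D_r y) r^{Q-1} dσ(y) dr` for all `f ∈ L¹(G)`. -/
theorem stmt_5 (n : ℕ) (hn : 0 < n) (v : Fin n → ℝ) (hv : ∀ j, 0 < v j)
    (N : (Fin n → ℝ) → ℝ) (hNc : Continuous N) (hNnn : ∀ x, 0 ≤ N x)
    (hN0 : ∀ x, N x = 0 ↔ x = 0)
    (hNh : ∀ r : ℝ, 0 < r → ∀ x, N (fun j => r ^ v j * x j) = r * N x) :
    ∃! σ : Measure {x : Fin n → ℝ // N x = 1},
      ∀ f : (Fin n → ℝ) → ℂ, Integrable f →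
        ∫ x, f x = ∫ r in Set.Ioi (0 : ℝ),
          (r ^ ((∑ j, v j) - 1)) •
            ∫ y : {x : Fin n → ℝ // N x = 1},
              f (fun j => r ^ v j * (y : Fin n → ℝ) j) ∂σ := by
  have H : Stmt5.Hyp n v N := ⟨hn, hv, hNc, hNnn, hN0, fun r hr x => hNh r hr x⟩
  refine ⟨Stmt5.sphMeasure H, ?_, ?_⟩
  · intro f hf
    exact Stmt5.polar_formula H f hf
  · intro σ' hσ'
    exact Stmt5.sphMeasure_unique H σ' hσ'
end

section
/- (Mean value inequality on a homogeneous group) Fix a homogeneous quasi-norm |·| on a homogeneous group G with dilation weights v_1 ≤ ⋯ ≤ v_n. There exists a constant C > 0 such that for every f ∈ C¹(G) and every x ∈ G, |f(x) − f(0)| ≤ C Σ_{j=1}^n |x|^{v_j} sup_{y∈G} |X_j f(y)|, where X_1, …, X_n are the left-invariant vector fields given by a basis adapted to the gradation. -/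
private lemma stmt6_local (n : ℕ)
    (mul : (Fin n → ℝ) → (Fin n → ℝ) → (Fin n → ℝ))
    (hmulsmooth : ContDiff ℝ (⊤ : ℕ∞) fun p : (Fin n → ℝ) × (Fin n → ℝ) => mul p.1 p.2)
    (hassoc : ∀ x y z, mul (mul x y) z = mul x (mul y z))
    (hone : ∀ x, mul x 0 = x ∧ mul 0 x = x)
    (hinv : ∀ x, mul x (-x) = 0 ∧ mul (-x) x = 0) :
    ∃ C : ℝ, 0 < C ∧ ∀ f : (Fin n → ℝ) → ℝ, ContDiff ℝ 1 f →
      ∀ M : Fin n → ℝ, (∀ j : Fin n, ∀ y : Fin n → ℝ,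
          |deriv (fun t : ℝ => f (mul y (t • (Pi.single j 1 : Fin n → ℝ)))) 0| ≤ M j) →
        ∀ u : Fin n → ℝ, ‖u‖ ≤ 1 → |f u - f 0| ≤ C * ∑ j, M j := by
  classical
  have _dummy : True := trivial
  have hmul1 : ContDiff ℝ 1 (fun p : (Fin n → ℝ) × (Fin n → ℝ) => mul p.1 p.2) := hmulsmooth.of_le (by exact_mod_cast le_top)
  have hLa : ∀ a : (Fin n → ℝ), ContDiff ℝ 1 (mul a) := fun a =>
    hmul1.comp (contDiff_const.prodMk contDiff_id)
  -- derivative of left translation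
  set A : (Fin n → ℝ) → ((Fin n → ℝ) →L[ℝ] (Fin n → ℝ)) := fun y => fderiv ℝ (mul y) 0 with hA
  set B : (Fin n → ℝ) → ((Fin n → ℝ) →L[ℝ] (Fin n → ℝ)) := fun y => fderiv ℝ (mul (-y)) y with hB
  have hABid : ∀ y : (Fin n → ℝ), (A y).comp (B y) = ContinuousLinearMap.id ℝ (Fin n → ℝ) := by
    intro y
    have hcomp : (mul y) ∘ (mul (-y)) = id := by
      funext z
      simp only [Function.comp_apply, id_eq, ← hassoc, (hinv y).1, (hone z).2]
    have h1 : HasFDerivAt (mul (-y)) (B y) y :=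
      ((hLa (-y)).differentiable one_ne_zero y).hasFDerivAt
    have h2 : HasFDerivAt (mul y) (A y) (mul (-y) y) := by
      rw [(hinv y).2]
      exact ((hLa y).differentiable one_ne_zero 0).hasFDerivAt
    have h3 : HasFDerivAt ((mul y) ∘ (mul (-y))) ((A y).comp (B y)) y := h2.comp y h1
    rw [hcomp] at h3
    exact h3.unique (hasFDerivAt_id y)
  -- the hypothesis derivative equals `fderiv f y (A y (Pi.single k 1))`
  have hderiv : ∀ (f : (Fin n → ℝ) → ℝ), ContDiff ℝ 1 f → ∀ (y : Fin n → ℝ) (k : Fin n),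
      HasDerivAt (fun t : ℝ => f (mul y (t • (Pi.single k 1 : Fin n → ℝ))))
        (fderiv ℝ f y (A y (Pi.single k 1))) 0 := by
    intro f hf y k
    have hpath : HasDerivAt (fun t : ℝ => t • (Pi.single k 1 : Fin n → ℝ))
        (Pi.single k 1) 0 := by
      simpa using (hasDerivAt_id (0:ℝ)).smul_const (Pi.single k 1 : Fin n → ℝ)
    have hmulA : HasFDerivAt (mul y) (A y) ((0:ℝ) • (Pi.single k 1 : Fin n → ℝ)) := by
      rw [zero_smul]
      exact ((hLa y).differentiable one_ne_zero 0).hasFDerivAt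
    have hfy : HasFDerivAt f (fderiv ℝ f y) (mul y ((0:ℝ) • (Pi.single k 1 : Fin n → ℝ))) := by
      rw [zero_smul, (hone y).1]
      exact ((hf.differentiable one_ne_zero) y).hasFDerivAt
    exact (hfy.comp_hasDerivAt 0 (hmulA.comp_hasDerivAt 0 hpath))
  -- representation of fderiv in terms of the left-invariant derivatives
  have hrep : ∀ (f : (Fin n → ℝ) → ℝ), ContDiff ℝ 1 f → ∀ (y w : Fin n → ℝ),
      fderiv ℝ f y w = ∑ k, (B y w k) • fderiv ℝ f y (A y (Pi.single k 1)) := by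
    intro f hf y w
    have hw : w = A y (∑ k, (B y w k) • (Pi.single k 1 : Fin n → ℝ)) := by
      have h1 : (∑ k, (B y w k) • (Pi.single k 1 : Fin n → ℝ)) = B y w := by
        have : ∀ k : Fin n, (B y w k) • (Pi.single k 1 : Fin n → ℝ)
            = Pi.single k (B y w k) := by
          intro k; funext j
          by_cases h : j = k <;> simp [Pi.single_apply, h]
        rw [Finset.sum_congr rfl (fun k _ => this k), Finset.univ_sum_single]
      rw [h1]
      have := congrArg (fun (L : (Fin n → ℝ) →L[ℝ] (Fin n → ℝ)) => L w) (hABid y)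
      simpa using this.symm
    conv_lhs => rw [hw]
    rw [map_sum, map_sum]
    exact Finset.sum_congr rfl (fun k _ => by rw [map_smul, map_smul])
  -- continuity of B
  have hBc : Continuous B := by
    have hFd : ∀ (a b : Fin n → ℝ), fderiv ℝ (mul a) b =
        (fderiv ℝ (fun p : (Fin n → ℝ) × (Fin n → ℝ) => mul p.1 p.2) (a, b)).comp
          ((0 : (Fin n → ℝ) →L[ℝ] (Fin n → ℝ)).prod (ContinuousLinearMap.id ℝ (Fin n → ℝ))) := by
      intro a b
      have hJ : HasFDerivAt (fun z : Fin n → ℝ => ((a, z) : (Fin n → ℝ) × (Fin n → ℝ)))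
          ((0 : (Fin n → ℝ) →L[ℝ] (Fin n → ℝ)).prod (ContinuousLinearMap.id ℝ (Fin n → ℝ))) b :=
        HasFDerivAt.prodMk (hasFDerivAt_const a b) (hasFDerivAt_id b)
      have hF : HasFDerivAt (fun p : (Fin n → ℝ) × (Fin n → ℝ) => mul p.1 p.2)
          (fderiv ℝ (fun p : (Fin n → ℝ) × (Fin n → ℝ) => mul p.1 p.2) (a, b)) (a, b) :=
        ((hmul1.differentiable one_ne_zero) (a, b)).hasFDerivAt
      exact (hF.comp b hJ).fderiv
    have h1 : Continuous fun y : Fin n → ℝ =>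
        fderiv ℝ (fun p : (Fin n → ℝ) × (Fin n → ℝ) => mul p.1 p.2) (-y, y) :=
      (hmulsmooth.continuous_fderiv (by simp)).comp
        (continuous_neg.prodMk continuous_id)
    have : Continuous fun y : Fin n → ℝ =>
        (fderiv ℝ (fun p : (Fin n → ℝ) × (Fin n → ℝ) => mul p.1 p.2) (-y, y)).comp
          ((0 : (Fin n → ℝ) →L[ℝ] (Fin n → ℝ)).prod (ContinuousLinearMap.id ℝ (Fin n → ℝ))) :=
      h1.clm_comp continuous_const
    simpa [hB, hFd] using this
  -- sup of ‖B‖ on the closed unit ball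
  obtain ⟨y₀, -, hy₀⟩ := (isCompact_closedBall (0 : Fin n → ℝ) 1).exists_isMaxOn
    ⟨0, Metric.mem_closedBall_self zero_le_one⟩ ((hBc.norm).continuousOn)
  refine ⟨‖B y₀‖ + 1, by positivity, ?_⟩
  intro f hf M hM u hu
  have hMnn : ∀ j, 0 ≤ M j := fun j => le_trans (abs_nonneg _) (hM j 0)
  have hsum : (0:ℝ) ≤ ∑ j, M j := Finset.sum_nonneg fun j _ => hMnn j
  have hbound : ∀ y ∈ Metric.closedBall (0 : Fin n → ℝ) 1,
      ‖fderiv ℝ f y‖ ≤ (‖B y₀‖ + 1) * ∑ j, M j := by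
    intro y hy
    refine ContinuousLinearMap.opNorm_le_bound _ (by positivity) (fun w => ?_)
    rw [hrep f hf y w]
    calc ‖∑ k, (B y w k) • fderiv ℝ f y (A y (Pi.single k 1))‖
        ≤ ∑ k, ‖(B y w k) • fderiv ℝ f y (A y (Pi.single k 1))‖ := norm_sum_le _ _
      _ ≤ ∑ k, (‖B y₀‖ + 1) * M k * ‖w‖ := by
          refine Finset.sum_le_sum fun k _ => ?_
          rw [norm_smul]
          have h1 : ‖B y w k‖ ≤ ‖B y‖ * ‖w‖ :=
            le_trans (norm_le_pi_norm (B y w) k) ((B y).le_opNorm w)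
          have h2 : ‖fderiv ℝ f y (A y (Pi.single k 1))‖ ≤ M k := by
            rw [← (hderiv f hf y k).deriv]
            exact hM k y
          have h3 : ‖B y‖ ≤ ‖B y₀‖ + 1 := le_trans (hy₀ hy) (by linarith)
          calc ‖B y w k‖ * ‖fderiv ℝ f y (A y (Pi.single k 1))‖
              ≤ (‖B y‖ * ‖w‖) * M k :=
                mul_le_mul h1 h2 (norm_nonneg _) (by positivity)
            _ ≤ ((‖B y₀‖ + 1) * ‖w‖) * M k := by
                have := mul_le_mul_of_nonneg_right
                  (mul_le_mul_of_nonneg_right h3 (norm_nonneg w)) (hMnn k)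
                linarith
            _ = (‖B y₀‖ + 1) * M k * ‖w‖ := by ring
      _ = ((‖B y₀‖ + 1) * ∑ j, M j) * ‖w‖ := by rw [← Finset.sum_mul, ← Finset.mul_sum]
  have := (convex_closedBall (0 : Fin n → ℝ) 1).norm_image_sub_le_of_norm_fderiv_le
    (fun y _ => (hf.differentiable one_ne_zero) y) hbound
    (Metric.mem_closedBall_self zero_le_one)
    (by simpa [Metric.mem_closedBall, dist_eq_norm] using hu)
  calc |f u - f 0| ≤ ((‖B y₀‖ + 1) * ∑ j, M j) * ‖u - 0‖ := this
    _ ≤ ((‖B y₀‖ + 1) * ∑ j, M j) * 1 := by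
        refine mul_le_mul_of_nonneg_left ?_ (by positivity)
        simpa using hu
    _ = (‖B y₀‖ + 1) * ∑ j, M j := mul_one _

private lemma stmt6_ball (n : ℕ) (hn : 0 < n) (v : Fin n → ℝ) (hv : ∀ j, 0 < v j)
    (N : (Fin n → ℝ) → ℝ) (hNc : Continuous N) (hNnn : ∀ x, 0 ≤ N x)
    (hN0 : ∀ x, N x = 0 ↔ x = 0)
    (hNh : ∀ r : ℝ, 0 < r → ∀ x, N (fun j => r ^ v j * x j) = r * N x) :
    ∃ m : ℝ, 0 < m ∧ ∀ x : Fin n → ℝ, N x < m → ‖x‖ ≤ 1 := by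
  haveI : Nontrivial (Fin n → ℝ) := by
    refine ⟨(Pi.single ⟨0, hn⟩ 1 : Fin n → ℝ), 0, fun h => ?_⟩
    have := congrFun h ⟨0, hn⟩
    simp at this
  have hsne : (Metric.sphere (0 : Fin n → ℝ) 1).Nonempty :=
    NormedSpace.sphere_nonempty.mpr zero_le_one
  obtain ⟨y₀, hy₀mem, hy₀⟩ :=
    (isCompact_sphere (0 : Fin n → ℝ) 1).exists_isMinOn hsne hNc.continuousOn
  have hy₀ne : y₀ ≠ 0 := by
    intro h
    rw [h] at hy₀mem
    simp at hy₀mem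
  have hm : 0 < N y₀ := lt_of_le_of_ne (hNnn y₀) (fun h => hy₀ne ((hN0 y₀).mp h.symm))
  refine ⟨N y₀, hm, fun x hx => ?_⟩
  by_contra h
  push_neg at h
  have hφc : Continuous fun r : ℝ => ‖(fun j => r ^ v j * x j : Fin n → ℝ)‖ := by
    refine Continuous.norm (continuous_pi fun j => Continuous.mul ?_ continuous_const)
    exact continuous_iff_continuousAt.mpr fun r =>
      Real.continuousAt_rpow_const r (v j) (Or.inr (hv j).le)
  have hφ0 : ‖(fun j => (0:ℝ) ^ v j * x j : Fin n → ℝ)‖ = 0 := by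
    have : (fun j => (0:ℝ) ^ v j * x j : Fin n → ℝ) = 0 := by
      funext j; simp [Real.zero_rpow (hv j).ne']
    rw [this, norm_zero]
  have hφ1 : ‖(fun j => (1:ℝ) ^ v j * x j : Fin n → ℝ)‖ = ‖x‖ := by
    simp [Real.one_rpow]
  have hsub : Set.Icc (‖(fun j => (0:ℝ) ^ v j * x j : Fin n → ℝ)‖)
      (‖(fun j => (1:ℝ) ^ v j * x j : Fin n → ℝ)‖) ⊆
      (fun r : ℝ => ‖(fun j => r ^ v j * x j : Fin n → ℝ)‖) '' Set.Icc 0 1 :=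
    intermediate_value_Icc zero_le_one hφc.continuousOn
  have h1mem : (1:ℝ) ∈ Set.Icc (‖(fun j => (0:ℝ) ^ v j * x j : Fin n → ℝ)‖)
      (‖(fun j => (1:ℝ) ^ v j * x j : Fin n → ℝ)‖) := by
    rw [hφ0, hφ1]; exact ⟨zero_le_one, le_of_lt h⟩
  obtain ⟨r₀, hr₀mem, hr₀x⟩ := hsub h1mem
  have hr₀ : ‖(fun j => r₀ ^ v j * x j : Fin n → ℝ)‖ = 1 := hr₀x
  have hr₀ne : r₀ ≠ 0 := by
    intro he; rw [he, hφ0] at hr₀; exact one_ne_zero hr₀.symm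
  have hr₀pos : 0 < r₀ := lt_of_le_of_ne hr₀mem.1 (Ne.symm hr₀ne)
  have hmem : (fun j => r₀ ^ v j * x j : Fin n → ℝ) ∈ Metric.sphere (0 : Fin n → ℝ) 1 := by
    simp [mem_sphere_zero_iff_norm, hr₀]
  have hle : N y₀ ≤ N (fun j => r₀ ^ v j * x j) := hy₀ hmem
  rw [hNh r₀ hr₀pos x] at hle
  have : r₀ * N x ≤ N x := by
    calc r₀ * N x ≤ 1 * N x := mul_le_mul_of_nonneg_right hr₀mem.2 (hNnn x)
      _ = N x := one_mul _
  linarith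

/-- Mean value inequality on a homogeneous group: there is a constant `C > 0` such
that for every `C¹` function `f` and every `x`,
`|f(x) − f(0)| ≤ C Σ_j |x|^{v_j} sup_y |X_j f(y)|`, where
`X_j f (y) = d/dt f(y · exp(t X_j))|_{t=0}` are the left-invariant vector fields
of a basis adapted to the gradation. -/
theorem stmt_6 (n : ℕ) (v : Fin n → ℝ) (hv : ∀ j, 0 < v j)
    (mul : (Fin n → ℝ) → (Fin n → ℝ) → (Fin n → ℝ))
    (hmulsmooth : ContDiff ℝ (⊤ : ℕ∞) fun p : (Fin n → ℝ) × (Fin n → ℝ) => mul p.1 p.2)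
    (hassoc : ∀ x y z, mul (mul x y) z = mul x (mul y z))
    (hone : ∀ x, mul x 0 = x ∧ mul 0 x = x)
    (hinv : ∀ x, mul x (-x) = 0 ∧ mul (-x) x = 0)
    (hdil : ∀ r : ℝ, 0 < r → ∀ x y,
      (fun j => r ^ v j * mul x y j) =
        mul (fun j => r ^ v j * x j) (fun j => r ^ v j * y j))
    (N : (Fin n → ℝ) → ℝ) (hNc : Continuous N) (hNnn : ∀ x, 0 ≤ N x)
    (hN0 : ∀ x, N x = 0 ↔ x = 0)
    (hNh : ∀ r : ℝ, 0 < r → ∀ x, N (fun j => r ^ v j * x j) = r * N x) :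
    ∃ C : ℝ, 0 < C ∧ ∀ f : (Fin n → ℝ) → ℝ, ContDiff ℝ 1 f →
      ∀ M : Fin n → ℝ,
        (∀ j : Fin n, ∀ y : Fin n → ℝ,
          |deriv (fun t : ℝ => f (mul y (t • (Pi.single j 1 : Fin n → ℝ)))) 0| ≤ M j) →
        ∀ x : Fin n → ℝ, |f x - f 0| ≤ C * ∑ j, N x ^ v j * M j := by
  rcases Nat.eq_zero_or_pos n with hn | hn
  · subst hn
    refine ⟨1, one_pos, fun f hf M hM x => ?_⟩
    have hx0 : x = 0 := funext fun j => j.elim0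
    simp [hx0]
  obtain ⟨C₁, hC₁, hloc⟩ := stmt6_local n mul hmulsmooth hassoc hone hinv
  obtain ⟨m, hm, hball⟩ := stmt6_ball n hn v hv N hNc hNnn hN0 hNh
  have hmul1 : ContDiff ℝ 1 (fun p : (Fin n → ℝ) × (Fin n → ℝ) => mul p.1 p.2) :=
    hmulsmooth.of_le (by exact_mod_cast le_top)
  have hLa : ∀ a : (Fin n → ℝ), ContDiff ℝ 1 (mul a) := fun a =>
    hmul1.comp (contDiff_const.prodMk contDiff_id)
  have hcurve : ∀ (f : (Fin n → ℝ) → ℝ), ContDiff ℝ 1 f → ∀ (z : Fin n → ℝ) (j : Fin n),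
      ContDiff ℝ 1 (fun t : ℝ => f (mul z (t • (Pi.single j 1 : Fin n → ℝ)))) :=
    fun f hf z j => hf.comp ((hLa z).comp (contDiff_id.smul contDiff_const))
  set K : ℝ := (∑ j, ((m/2)⁻¹) ^ v j) + 1 with hK
  have hKsumnn : (0:ℝ) ≤ ∑ j, ((m/2)⁻¹) ^ v j :=
    Finset.sum_nonneg fun j _ => Real.rpow_nonneg (by positivity) _
  have hKpos : 0 < K := by rw [hK]; linarith
  refine ⟨C₁ * K, mul_pos hC₁ hKpos, fun f hf M hM x => ?_⟩
  have hMnn : ∀ j, 0 ≤ M j := fun j => le_trans (abs_nonneg _) (hM j 0)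
  by_cases hx0 : x = 0
  · have hN0' : N x = 0 := (hN0 x).mpr hx0
    have hz : ∑ j, N x ^ v j * M j = 0 :=
      Finset.sum_eq_zero fun j _ => by rw [hN0', Real.zero_rpow (hv j).ne', zero_mul]
    rw [hz, mul_zero, hx0, sub_self, abs_zero]
  · have hNx : 0 < N x :=
      lt_of_le_of_ne (hNnn x) (Ne.symm fun h => hx0 ((hN0 x).mp h))
    set r : ℝ := N x / (m/2) with hr
    have hrpos : 0 < r := by rw [hr]; positivity
    set u : Fin n → ℝ := fun j => r⁻¹ ^ v j * x j with hu
    have hNu : N u = m/2 := by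
      rw [hu, hNh r⁻¹ (inv_pos.mpr hrpos) x, hr]
      field_simp
    have hunorm : ‖u‖ ≤ 1 := hball u (by rw [hNu]; linarith)
    set g : (Fin n → ℝ) → ℝ := fun z => f (fun j => r ^ v j * z j) with hg
    have hgc : ContDiff ℝ 1 g := hf.comp (contDiff_pi.mpr fun j =>
      contDiff_const.mul ((ContinuousLinearMap.proj (R := ℝ)
        (φ := fun _ : Fin n => ℝ) j).contDiff))
    have hMg : ∀ (j : Fin n) (y : Fin n → ℝ),
        |deriv (fun t : ℝ => g (mul y (t • (Pi.single j 1 : Fin n → ℝ)))) 0| ≤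
          r ^ v j * M j := by
      intro j y
      set h : ℝ → ℝ :=
        fun s => f (mul (fun k => r ^ v k * y k) (s • (Pi.single j 1 : Fin n → ℝ))) with hh
      have hz : (fun t : ℝ => g (mul y (t • (Pi.single j 1 : Fin n → ℝ)))) =
          fun t : ℝ => h (r ^ v j * t) := by
        funext t
        have harg : (fun k => r ^ v k * (t • (Pi.single j 1 : Fin n → ℝ)) k) =
            ((r ^ v j * t) • (Pi.single j 1 : Fin n → ℝ)) := by
          funext k
          by_cases hk : k = j
          · subst hk
            simp only [Pi.smul_apply, Pi.single_eq_same, smul_eq_mul]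
            ring
          · simp [Pi.single_apply, hk]
        rw [hg, hh]
        show f (fun k => r ^ v k * (mul y (t • (Pi.single j 1 : Fin n → ℝ))) k) = _
        rw [hdil r hrpos y (t • (Pi.single j 1 : Fin n → ℝ)), harg]
      have hhc : ContDiff ℝ 1 h := hcurve f hf _ j
      have hhd : HasDerivAt h (deriv h 0) ((r ^ v j) * 0) := by
        rw [mul_zero]
        exact ((hhc.differentiable one_ne_zero) 0).hasDerivAt
      have hc : HasDerivAt (fun t : ℝ => r ^ v j * t) (r ^ v j) 0 := by
        simpa using (hasDerivAt_id (0:ℝ)).const_mul (r ^ v j)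
      have hcomp : HasDerivAt (fun t : ℝ => h (r ^ v j * t)) (deriv h 0 * r ^ v j) 0 :=
        HasDerivAt.comp 0 hhd hc
      rw [hz, hcomp.deriv, abs_mul, abs_of_nonneg (Real.rpow_nonneg hrpos.le _), mul_comm]
      exact mul_le_mul_of_nonneg_left (hM j _) (Real.rpow_nonneg hrpos.le _)
    have hest := hloc g hgc (fun j => r ^ v j * M j) hMg u hunorm
    have hgu : g u = f x := by
      rw [hg]
      show f (fun k => r ^ v k * u k) = f x
      congr 1
      funext k
      rw [hu]
      show r ^ v k * (r⁻¹ ^ v k * x k) = x k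
      rw [← mul_assoc, ← Real.mul_rpow hrpos.le (inv_nonneg.mpr hrpos.le),
        mul_inv_cancel₀ hrpos.ne', Real.one_rpow, one_mul]
    have hg0 : g 0 = f 0 := by
      rw [hg]
      show f (fun k => r ^ v k * (0 : Fin n → ℝ) k) = f 0
      congr 1
      funext k
      simp
    rw [hgu, hg0] at hest
    have hterm : ∀ j : Fin n, r ^ v j * M j ≤ K * (N x ^ v j * M j) := by
      intro j
      have h1 : r ^ v j = N x ^ v j * ((m/2)⁻¹) ^ v j := by
        rw [hr, div_eq_mul_inv, Real.mul_rpow (hNnn x) (by positivity)]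
      have h2 : ((m/2)⁻¹) ^ v j ≤ K := by
        rw [hK]
        have := Finset.single_le_sum (f := fun i => ((m/2)⁻¹) ^ v i)
          (fun i _ => Real.rpow_nonneg (by positivity) _) (Finset.mem_univ j)
        linarith
      calc r ^ v j * M j = N x ^ v j * (((m/2)⁻¹) ^ v j * M j) := by rw [h1]; ring
        _ ≤ N x ^ v j * (K * M j) :=
            mul_le_mul_of_nonneg_left
              (mul_le_mul_of_nonneg_right h2 (hMnn j)) (Real.rpow_nonneg (hNnn x) _)
        _ = K * (N x ^ v j * M j) := by ring
    calc |f x - f 0| ≤ C₁ * ∑ j, r ^ v j * M j := hest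
      _ ≤ C₁ * ∑ j, K * (N x ^ v j * M j) :=
          mul_le_mul_of_nonneg_left (Finset.sum_le_sum fun j _ => hterm j) hC₁.le
      _ = (C₁ * K) * ∑ j, N x ^ v j * M j := by rw [← Finset.mul_sum, mul_assoc]
end
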